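/- Let L(θ⁰ + Δ) = L₀ + ⟨G, Δ⟩_F + (1/2)·Σ_{j=1}^{IC} h_j·‖Δ_{:,j}‖₂² be the quadratic loss surrogate, and for each column index j define the score s_j = ‖G_{:,j}‖₂²/h_j. Let k ≤ IC and let Ŝ be a set of k column indices such that s_i ≥ s_j for every i ∈ Ŝ and every j ∉ Ŝ (a top-k set for the scores s). Then for every subset S of column indices with |S| = k, inf { L(θ⁰ + Δ) : Δ supported on Ŝ } ≤ inf { L(θ⁰ + Δ) : Δ supported on S }. In particular, among all channel-wise masks of budget k, the mask selecting the top-k columns by the score ‖∇L(θ⁰)_{:,j}‖₂²/h_j minimizes the infimum of the loss. -/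
import Mathlib


/-- The quadratic loss surrogate `L(θ⁰ + Δ) = L₀ + ⟨G, Δ⟩_F + (1/2)·Σⱼ hⱼ·‖Δ_{:,j}‖₂²`. -/
noncomputable def quadLoss {OC IC : ℕ} (G : Matrix (Fin OC) (Fin IC) ℝ) (L₀ : ℝ)
    (h : Fin IC → ℝ) (Δ : Matrix (Fin OC) (Fin IC) ℝ) : ℝ :=
  L₀ + (∑ i, ∑ j, G i j * Δ i j) + (1 / 2) * ∑ j, h j * ∑ i, (Δ i j) ^ 2

/-- `Δ` is supported on the set `S` of column indices: `Δ_{:,j} = 0` for `j ∉ S`. -/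
def SupportedOn {OC IC : ℕ} (Δ : Matrix (Fin OC) (Fin IC) ℝ) (S : Finset (Fin IC)) : Prop :=
  ∀ j ∉ S, ∀ i, Δ i j = 0

lemma quadLoss_eq {OC IC : ℕ} (G : Matrix (Fin OC) (Fin IC) ℝ) (L₀ : ℝ)
    (h : Fin IC → ℝ) (Δ : Matrix (Fin OC) (Fin IC) ℝ) :
    quadLoss G L₀ h Δ
      = L₀ + ∑ j, (∑ i, G i j * Δ i j + (1 / 2) * (h j * ∑ i, (Δ i j) ^ 2)) := by
  unfold quadLoss
  rw [Finset.sum_comm (γ := Fin OC), Finset.sum_add_distrib, Finset.mul_sum]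
  ring

lemma col_lb {OC : ℕ} (g d : Fin OC → ℝ) (hj : ℝ) (hpos : 0 < hj) :
    -(1 / 2) * ((∑ i, g i ^ 2) / hj) ≤ ∑ i, g i * d i + (1 / 2) * (hj * ∑ i, d i ^ 2) := by
  have hne : hj ≠ 0 := ne_of_gt hpos
  have expand : ∀ i : Fin OC, (hj / 2) * (d i + g i / hj) ^ 2
      = g i * d i + (1 / 2) * (hj * d i ^ 2) + (1 / 2) * (g i ^ 2 / hj) := by
    intro i; field_simp; ring
  have key : (hj / 2) * ∑ i, (d i + g i / hj) ^ 2
      = (∑ i, g i * d i) + (1 / 2) * (hj * ∑ i, d i ^ 2) + (1 / 2) * ((∑ i, g i ^ 2) / hj) := by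
    rw [Finset.mul_sum]
    rw [show (∑ i, (hj / 2) * (d i + g i / hj) ^ 2)
        = ∑ i, (g i * d i + (1 / 2) * (hj * d i ^ 2) + (1 / 2) * (g i ^ 2 / hj)) from
      Finset.sum_congr rfl fun i _ => expand i]
    rw [Finset.sum_add_distrib, Finset.sum_add_distrib, ← Finset.mul_sum, ← Finset.mul_sum,
      ← Finset.mul_sum, ← Finset.sum_div]
  have hnn : 0 ≤ (hj / 2) * ∑ i, (d i + g i / hj) ^ 2 :=
    mul_nonneg (by linarith) (Finset.sum_nonneg fun i _ => sq_nonneg _)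
  linarith [key ▸ hnn]

/-- Theorem 1 (optimal weak-column selection): if `Ŝ` is a top-`k` set for the scores
`sⱼ = ‖G_{:,j}‖₂²/hⱼ`, then for every budget-`k` subset `S` of column indices, the infimum of
the quadratic loss surrogate over matrices supported on `Ŝ` is at most the infimum over
matrices supported on `S`. -/
theorem stmt_2 (OC IC : ℕ) (θ0 G : Matrix (Fin OC) (Fin IC) ℝ) (L₀ : ℝ)
    (h : Fin IC → ℝ) (hh : ∀ j, 0 < h j) (k : ℕ) (hk : k ≤ IC)
    (Shat : Finset (Fin IC)) (hShat : Shat.card = k)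
    (htop : ∀ i ∈ Shat, ∀ j ∉ Shat,
      (∑ l, (G l j) ^ 2) / h j ≤ (∑ l, (G l i) ^ 2) / h i) :
    ∀ S : Finset (Fin IC), S.card = k →
      sInf {x : ℝ | ∃ Δ : Matrix (Fin OC) (Fin IC) ℝ, SupportedOn Δ Shat ∧ x = quadLoss G L₀ h Δ} ≤
      sInf {x : ℝ | ∃ Δ : Matrix (Fin OC) (Fin IC) ℝ, SupportedOn Δ S ∧ x = quadLoss G L₀ h Δ} := by
  intro S hS
  set s : Fin IC → ℝ := fun j => (∑ l, (G l j) ^ 2) / h j with hs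
  have hs_nonneg : ∀ j, 0 ≤ s j := fun j =>
    div_nonneg (Finset.sum_nonneg fun l _ => sq_nonneg _) (le_of_lt (hh j))
  -- lower bound for any support set T
  have lb : ∀ (T : Finset (Fin IC)) (Δ : Matrix (Fin OC) (Fin IC) ℝ), SupportedOn Δ T →
      L₀ - (1 / 2) * ∑ j ∈ T, s j ≤ quadLoss G L₀ h Δ := by
    intro T Δ hsup
    rw [quadLoss_eq]
    have hzero : ∀ j ∈ Finset.univ, j ∉ T →
        (∑ i, G i j * Δ i j + (1 / 2) * (h j * ∑ i, (Δ i j) ^ 2)) = 0 := by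
      intro j _ hj
      have : ∀ i, Δ i j = 0 := hsup j hj
      simp [this]
    rw [← Finset.sum_subset (Finset.subset_univ T) hzero]
    have : ∑ j ∈ T, (-(1 / 2) * s j)
        ≤ ∑ j ∈ T, (∑ i, G i j * Δ i j + (1 / 2) * (h j * ∑ i, (Δ i j) ^ 2)) :=
      Finset.sum_le_sum fun j _ => col_lb (fun i => G i j) (fun i => Δ i j) (h j) (hh j)
    have heq : ∑ j ∈ T, (-(1 / 2) * s j) = -((1 / 2) * ∑ j ∈ T, s j) := by
      rw [← Finset.mul_sum]; ring
    linarith [heq ▸ this]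
  -- the minimizer over Shat
  set Δhat : Matrix (Fin OC) (Fin IC) ℝ :=
    fun i j => if j ∈ Shat then -(G i j) / h j else 0 with hΔhat
  have hsuphat : SupportedOn Δhat Shat := by
    intro j hj i; simp [hΔhat, hj]
  have hval : quadLoss G L₀ h Δhat = L₀ - (1 / 2) * ∑ j ∈ Shat, s j := by
    rw [quadLoss_eq]
    have hterm : ∀ j : Fin IC,
        (∑ i, G i j * Δhat i j + (1 / 2) * (h j * ∑ i, (Δhat i j) ^ 2))
          = if j ∈ Shat then -(1 / 2) * s j else 0 := by
      intro j
      by_cases hj : j ∈ Shat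
      · simp only [hΔhat, hj, if_true]
        have hne : h j ≠ 0 := ne_of_gt (hh j)
        have h1 : ∀ i : Fin OC, G i j * (-(G i j) / h j) = -(G i j ^ 2 / h j) := by
          intro i; rw [sq, neg_div, mul_neg, ← mul_div_assoc]
        have h2 : ∀ i : Fin OC, (-(G i j) / h j) ^ 2 = G i j ^ 2 / h j ^ 2 := by
          intro i; rw [div_pow, neg_sq]
        rw [Finset.sum_congr rfl fun i _ => h1 i, Finset.sum_congr rfl fun i _ => h2 i]
        rw [Finset.sum_neg_distrib, ← Finset.sum_div, ← Finset.sum_div]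
        simp only [hs]
        field_simp
        ring
      · simp [hΔhat, hj]
    rw [Finset.sum_congr rfl fun j _ => hterm j, Finset.sum_ite_mem,
      Finset.univ_inter, ← Finset.mul_sum]
    ring
  -- sum comparison
  have sumcmp : ∑ j ∈ S, s j ≤ ∑ j ∈ Shat, s j := by
    have hsplitS : ∑ j ∈ S ∩ Shat, s j + ∑ j ∈ S \ Shat, s j = ∑ j ∈ S, s j :=
      Finset.sum_inter_add_sum_sdiff S Shat s
    have hsplitShat : ∑ j ∈ Shat ∩ S, s j + ∑ j ∈ Shat \ S, s j = ∑ j ∈ Shat, s j :=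
      Finset.sum_inter_add_sum_sdiff Shat S s
    have hcard : (S \ Shat).card = (Shat \ S).card := by
      have h1 := Finset.card_sdiff_add_card_inter S Shat
      have h2 := Finset.card_sdiff_add_card_inter Shat S
      rw [Finset.inter_comm] at h2
      omega
    have hdiff : ∑ j ∈ S \ Shat, s j ≤ ∑ j ∈ Shat \ S, s j := by
      rcases (Shat \ S).eq_empty_or_nonempty with he | hne
      · have : (S \ Shat).card = 0 := by rw [hcard, he, Finset.card_empty]
        rw [Finset.card_eq_zero.mp this, he]
      · obtain ⟨m, hm, hmin⟩ := Finset.exists_min_image (Shat \ S) s hne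
        have hmShat : m ∈ Shat := (Finset.mem_sdiff.mp hm).1
        have hA : ∑ j ∈ S \ Shat, s j ≤ (S \ Shat).card • s m :=
          Finset.sum_le_card_nsmul _ _ _ fun j hj =>
            htop m hmShat j (Finset.mem_sdiff.mp hj).2
        have hB : (Shat \ S).card • s m ≤ ∑ j ∈ Shat \ S, s j :=
          Finset.card_nsmul_le_sum _ _ _ fun j hj => hmin j hj
        rw [hcard] at hA
        exact le_trans hA hB
    have hic : ∑ j ∈ S ∩ Shat, s j = ∑ j ∈ Shat ∩ S, s j := by rw [Finset.inter_comm]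
    linarith
  -- assemble
  have step1 : sInf {x : ℝ | ∃ Δ : Matrix (Fin OC) (Fin IC) ℝ,
      SupportedOn Δ Shat ∧ x = quadLoss G L₀ h Δ} ≤ L₀ - (1 / 2) * ∑ j ∈ Shat, s j := by
    have hbdd : BddBelow {x : ℝ | ∃ Δ : Matrix (Fin OC) (Fin IC) ℝ,
        SupportedOn Δ Shat ∧ x = quadLoss G L₀ h Δ} := by
      refine ⟨L₀ - (1 / 2) * ∑ j ∈ Shat, s j, ?_⟩
      rintro x ⟨Δ, hΔ, rfl⟩
      exact lb Shat Δ hΔ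
    have hmem : quadLoss G L₀ h Δhat ∈ {x : ℝ | ∃ Δ : Matrix (Fin OC) (Fin IC) ℝ,
        SupportedOn Δ Shat ∧ x = quadLoss G L₀ h Δ} := ⟨Δhat, hsuphat, rfl⟩
    calc sInf _ ≤ quadLoss G L₀ h Δhat := csInf_le hbdd hmem
      _ = L₀ - (1 / 2) * ∑ j ∈ Shat, s j := hval
  have step3 : L₀ - (1 / 2) * ∑ j ∈ S, s j ≤ sInf {x : ℝ | ∃ Δ : Matrix (Fin OC) (Fin IC) ℝ,
      SupportedOn Δ S ∧ x = quadLoss G L₀ h Δ} := by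
    apply le_csInf
    · exact ⟨quadLoss G L₀ h 0, 0, fun j _ i => rfl, rfl⟩
    · rintro x ⟨Δ, hΔ, rfl⟩
      exact lb S Δ hΔ
  have step2 : L₀ - (1 / 2) * ∑ j ∈ Shat, s j ≤ L₀ - (1 / 2) * ∑ j ∈ S, s j := by
    linarith
  linarith
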